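/- Let x₀ be a character of M, ρ₀ the state of 𝔄 defined by ρ₀(a) = x₀(E(a)), and n a normalizer of M with x₀(n*n) > 0 and x₀(n* h n) = x₀(h) · x₀(n*n) for all h ∈ M (so αₙ fixes x₀). Define the linear functional φ on 𝔄 by φ(a) = x₀(E(n* a))/√(x₀(n*n)). Then |φ(a)| ≤ ρ₀(a) for every positive element a ∈ 𝔄. -/

import Mathlib

open scoped ComplexOrder InnerProductSpace

variable {A : Type*} [NormedRing A] [StarRing A] [CStarRing A]
  [NormedAlgebra ℂ A] [CompleteSpace A] [StarModule ℂ A]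
  [PartialOrder A] [StarOrderedRing A]

/-- `n` is a normalizer of the subalgebra `M`: `n* M n ⊆ M` and `n M n* ⊆ M`
(in particular `n*n ∈ M` and `n n* ∈ M`, taking `h = 1`). -/
structure IsNormalizer (M : StarSubalgebra ℂ A) (n : A) : Prop where
  conj_mem : ∀ h ∈ M, star n * h * n ∈ M
  conj_mem' : ∀ h ∈ M, n * h * star n ∈ M
  sq_mem : star n * n ∈ M
  sq_mem' : n * star n ∈ M

/-- `y = αₙ(x)`: the character `y` satisfies `x(n* h n) = y(h) · x(n*n)` for all `h ∈ M`. -/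
def IsAlpha (M : StarSubalgebra ℂ A) (n : A) (hn : IsNormalizer M n)
    (x y : M →⋆ₐ[ℂ] ℂ) : Prop :=
  ∀ h : M, x ⟨star n * (h : A) * n, hn.conj_mem (h : A) h.2⟩
    = y h * x ⟨star n * n, hn.sq_mem⟩

/-- `y` lies in the pseudo-orbit `𝒢(x₀)`: there is a normalizer `m` of `M` with
`x₀(m*m) ≠ 0` and `y = α_m(x₀)`. -/
def InPseudoOrbit (M : StarSubalgebra ℂ A) (x₀ y : M →⋆ₐ[ℂ] ℂ) : Prop :=
  ∃ m, ∃ hm : IsNormalizer M m,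
    x₀ ⟨star m * m, hm.sq_mem⟩ ≠ 0 ∧ IsAlpha M m hm x₀ y

/-- If `x₀` is a character of `M` fixed by `αₙ` for a normalizer `n` with `x₀(n*n) > 0`,
then the functional `φ(a) = x₀(E(n* a)) / √(x₀(n*n))` satisfies `|φ(a)| ≤ ρ₀(a) = x₀(E(a))`
for every positive `a ∈ A`. -/
theorem abs_phi_le_rho_of_fixed_point
    (M : StarSubalgebra ℂ A) (hMclosed : IsClosed (M : Set A))
    (hMcomm : ∀ a ∈ M, ∀ b ∈ M, a * b = b * a)
    (E : A →ₗ[ℂ] A)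
    (hErange : ∀ a, E a ∈ M)
    (hEfix : ∀ h ∈ M, E h = h)
    (hEpos : ∀ a : A, 0 ≤ a → 0 ≤ E a)
    (hEcov : ∀ k, IsNormalizer M k → ∀ a, E (star k * a * k) = star k * E a * k)
    (x₀ : M →⋆ₐ[ℂ] ℂ)
    (n : A) (hn : IsNormalizer M n)
    (hpos : 0 < x₀ ⟨star n * n, hn.sq_mem⟩)
    (hfix : IsAlpha M n hn x₀ x₀) :
    ∀ a : A, 0 ≤ a →
      (‖x₀ ⟨E (star n * a), hErange _⟩
          / (Real.sqrt ((x₀ ⟨star n * n, hn.sq_mem⟩).re) : ℂ)‖ : ℂ)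
        ≤ x₀ ⟨E a, hErange a⟩ := by
  intro a ha
  letI : CStarAlgebra A := {}
  -- positivity of the character on elements of M that are nonnegative in A
  have hx₀ : ∀ m : M, 0 ≤ (m : A) → 0 ≤ x₀ m := by
    intro m hm
    have h1 : x₀ m ∈ spectrum ℂ m := AlgHom.apply_mem_spectrum x₀ m
    have h2 : spectrum ℂ m = spectrum ℂ (m : A) :=
      StarSubalgebra.spectrum_eq (hS := hMclosed) (S := M) (a := m)
    rw [h2] at h1
    exact spectrum_nonneg_of_nonneg hm h1
  -- E is star-preserving
  have hEsa : ∀ b : A, IsSelfAdjoint b → IsSelfAdjoint (E b) := by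
    intro b hb
    have hdec : E b = E b⁺ - E b⁻ := by rw [← map_sub, CFC.posPart_sub_negPart b hb]
    rw [hdec]
    exact ((hEpos _ (CFC.posPart_nonneg b)).isSelfAdjoint).sub
      ((hEpos _ (CFC.negPart_nonneg b)).isSelfAdjoint)
  have hEstar : ∀ b : A, E (star b) = star (E b) := by
    intro b
    obtain ⟨h, hh, k, hk, rfl⟩ :
        ∃ h, IsSelfAdjoint h ∧ ∃ k, IsSelfAdjoint k ∧ h + Complex.I • k = b :=
      ⟨(realPart b : A), (realPart b).2, (imaginaryPart b : A), (imaginaryPart b).2,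
        realPart_add_I_smul_imaginaryPart b⟩
    have h1 := (hEsa h hh).star_eq
    have h2 := (hEsa k hk).star_eq
    simp only [star_add, star_smul, hh.star_eq, hk.star_eq, map_add, map_smul, h1, h2,
      Complex.star_def, Complex.conj_I, neg_smul]
    rw [map_neg, map_smul]
  -- the functional ρ = x₀ ∘ E and its properties
  set ρ : A → ℂ := fun b => x₀ ⟨E b, hErange b⟩ with hρ
  have hρadd : ∀ b c : A, ρ (b + c) = ρ b + ρ c := by
    intro b c
    have h1 : (⟨E (b + c), hErange _⟩ : M) = ⟨E b, hErange b⟩ + ⟨E c, hErange c⟩ :=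
      Subtype.ext (map_add E b c)
    show x₀ ⟨E (b + c), hErange _⟩ = x₀ ⟨E b, hErange b⟩ + x₀ ⟨E c, hErange c⟩
    rw [h1, map_add]
  have hρsmul : ∀ (z : ℂ) (b : A), ρ (z • b) = z * ρ b := by
    intro z b
    have h1 : (⟨E (z • b), hErange _⟩ : M) = z • ⟨E b, hErange b⟩ :=
      Subtype.ext (map_smul E z b)
    show x₀ ⟨E (z • b), hErange _⟩ = z * x₀ ⟨E b, hErange b⟩
    rw [h1, map_smul, smul_eq_mul]
  have hρconj : ∀ b : A, (starRingEnd ℂ) (ρ b) = ρ (star b) := by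
    intro b
    have h1 : (⟨E (star b), hErange _⟩ : M) = star ⟨E b, hErange b⟩ :=
      Subtype.ext (hEstar b)
    show (starRingEnd ℂ) (x₀ ⟨E b, hErange b⟩) = x₀ ⟨E (star b), hErange _⟩
    rw [h1, map_star]
    rfl
  have hρpos : ∀ b : A, 0 ≤ b → 0 ≤ ρ b := fun b hb =>
    hx₀ ⟨E b, hErange b⟩ (hEpos b hb)
  -- Cauchy-Schwarz via a pre-inner-product space core
  letI core : PreInnerProductSpace.Core ℂ A :=
    { inner := fun u v => ρ (star u * v)
      conj_inner_symm := fun x y => by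
        show (starRingEnd ℂ) (ρ (star y * x)) = ρ (star x * y)
        rw [hρconj, star_mul, star_star]
      re_inner_nonneg := fun x => by
        show 0 ≤ RCLike.re (ρ (star x * x))
        have := hρpos _ (star_mul_self_nonneg x)
        simpa [RCLike.re_to_complex] using (Complex.le_def.mp this).1
      add_left := fun x y z => by
        show ρ (star (x + y) * z) = ρ (star x * z) + ρ (star y * z)
        rw [star_add, add_mul, hρadd]
      smul_left := fun x y r => by
        show ρ (star (r • x) * y) = (starRingEnd ℂ) r * ρ (star x * y)
        rw [star_smul, smul_mul_assoc, hρsmul]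
        rfl }
  set s : A := CFC.sqrt a with hsdef
  have hs : s * s = a := CFC.sqrt_mul_sqrt_self a ha
  have hssa : star s = s := (IsSelfAdjoint.of_nonneg (CFC.sqrt_nonneg a)).star_eq
  have key : ‖ρ (star (s * n) * s)‖ * ‖ρ (star s * (s * n))‖
      ≤ RCLike.re (ρ (star (s * n) * (s * n))) * RCLike.re (ρ (star s * s)) :=
    InnerProductSpace.Core.inner_mul_inner_self_le (𝕜 := ℂ) (s * n) s
  have e1 : star (s * n) * s = star n * a := by
    rw [star_mul, hssa, mul_assoc, hs]
  have e2 : star s * (s * n) = a * n := by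
    rw [hssa, ← mul_assoc, hs]
  have e3 : star (s * n) * (s * n) = star n * a * n := by
    rw [star_mul, hssa, mul_assoc, ← mul_assoc s, hs, ← mul_assoc]
  have e4 : star s * s = a := by rw [hssa, hs]
  rw [e1, e2, e3, e4] at key
  -- identify the terms
  set t : ℂ := x₀ ⟨star n * n, hn.sq_mem⟩ with ht
  set r : ℂ := x₀ ⟨E a, hErange a⟩ with hr
  set X : ℂ := x₀ ⟨E (star n * a), hErange _⟩ with hX
  have hρna : ρ (star n * a) = X := rfl
  have hρa : ρ a = r := rfl
  have han : ρ (a * n) = (starRingEnd ℂ) X := by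
    have : a * n = star (star n * a) := by
      rw [star_mul, star_star, (IsSelfAdjoint.of_nonneg ha).star_eq]
    rw [this, ← hρconj, hρna]
  have hcov : ρ (star n * a * n) = r * t := by
    have h1 : (⟨E (star n * a * n), hErange _⟩ : M)
        = ⟨star n * (E a) * n, hn.conj_mem (E a) (hErange a)⟩ :=
      Subtype.ext (hEcov n hn a)
    have h2 := hfix ⟨E a, hErange a⟩
    show x₀ ⟨E (star n * a * n), hErange _⟩ = r * t
    rw [h1]
    exact h2
  rw [hρna, hρa, han, hcov] at key
  have hrpos : 0 ≤ r := hρpos a ha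
  have hrre : 0 ≤ r.re := (Complex.le_def.mp hrpos).1
  have hrim : r.im = 0 := ((Complex.le_def.mp hrpos).2).symm
  have htre : 0 < t.re := (Complex.lt_def.mp hpos).1
  have htim : t.im = 0 := ((Complex.lt_def.mp hpos).2).symm
  have key2 : ‖X‖ * ‖X‖ ≤ (r.re * t.re) * r.re := by
    have h1 : ‖(starRingEnd ℂ) X‖ = ‖X‖ := RCLike.norm_conj X
    have h2 : RCLike.re (r * t) = r.re * t.re := by
      simp [RCLike.re_to_complex, Complex.mul_re, hrim, htim]
    have h3 : RCLike.re r = r.re := by simp [RCLike.re_to_complex]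
    rw [h1, h2, h3] at key
    exact key
  -- conclude
  have hseq : Real.sqrt t.re * Real.sqrt t.re = t.re := Real.mul_self_sqrt htre.le
  have hspos : 0 < Real.sqrt t.re := Real.sqrt_pos.mpr htre
  have key3 : ‖X‖ * ‖X‖ ≤ (r.re * Real.sqrt t.re) * (r.re * Real.sqrt t.re) := by
    rw [show (r.re * Real.sqrt t.re) * (r.re * Real.sqrt t.re)
        = (r.re * (Real.sqrt t.re * Real.sqrt t.re)) * r.re by ring, hseq]
    exact key2
  have hXle : ‖X‖ ≤ r.re * Real.sqrt t.re := by
    nlinarith [norm_nonneg X, mul_nonneg hrre hspos.le, key3]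
  have habs : ‖X / ((Real.sqrt t.re : ℝ) : ℂ)‖ = ‖X‖ / Real.sqrt t.re := by
    rw [norm_div, Complex.norm_real, Real.norm_of_nonneg hspos.le]
  have hrval : r = ((r.re : ℝ) : ℂ) := Complex.ext rfl (by simp [hrim])
  calc ((‖X / ((Real.sqrt t.re : ℝ) : ℂ)‖ : ℝ) : ℂ)
      = ((‖X‖ / Real.sqrt t.re : ℝ) : ℂ) := by rw [habs]
    _ ≤ ((r.re : ℝ) : ℂ) := by
        rw [Complex.real_le_real]
        rw [div_le_iff₀ hspos]
        exact hXle
    _ = r := hrval.symm
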